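/- Under global mean reversion with X_t = M_t - μ bounded in [-1/2, 1/2] (up to a shift), the sample mean μ̂_t = (1/t)∑_{τ=1}^t M_τ satisfies, uniformly over 1 ≤ t ≤ T with probability at least 1-δ: |μ̂_t - μ| ≤ sqrt(4 log(2T/δ)/t). -/

import Mathlib

open MeasureTheory Finset Real

/-- Chord inequality for `exp` on `[-1,1]`. -/
lemma chord_exp {x l : ℝ} (hx : |x| ≤ 1) : exp (l * x) ≤ cosh l + x * sinh l := by
  have h1 : -1 ≤ x := neg_le_of_abs_le hx
  have h2 : x ≤ 1 := le_of_abs_le hx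
  have hc := convexOn_exp.2 (Set.mem_univ l) (Set.mem_univ (-l))
      (by linarith : (0:ℝ) ≤ (1 + x) / 2) (by linarith : (0:ℝ) ≤ (1 - x) / 2)
      (by ring : (1 + x) / 2 + (1 - x) / 2 = 1)
  simp only [smul_eq_mul] at hc
  have he : (1 + x) / 2 * l + (1 - x) / 2 * (-l) = l * x := by ring
  rw [he] at hc
  rw [Real.cosh_eq, Real.sinh_eq]
  nlinarith [hc]

lemma integrable_of_ae_abs_le {Ω : Type*} {m : MeasurableSpace Ω} {ℙ : Measure Ω}
    [IsFiniteMeasure ℙ] {f : Ω → ℝ} {C : ℝ} (hm : AEStronglyMeasurable f ℙ)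
    (h : ∀ᵐ ω ∂ℙ, |f ω| ≤ C) : Integrable f ℙ :=
  (integrable_const C).mono' hm (by simpa [Real.norm_eq_abs] using h)

/-- The key moment generating function bound for the mean-reverting partial sums. -/
lemma mgf_bound {Ω : Type*} {m : MeasurableSpace Ω} (ℙ : Measure Ω) [IsProbabilityMeasure ℙ]
    (ℱ : Filtration ℕ m) (T : ℕ)
    (X : ℕ → Ω → ℝ) (hXm : ∀ t, StronglyMeasurable[ℱ t] (X t))
    (hXb : ∀ t, ∀ᵐ ω ∂ℙ, |X t ω| ≤ 1)
    (S : ℕ → Ω → ℝ) (hS : ∀ t ω, S t ω = ∑ τ ∈ Finset.Icc 1 t, X τ ω)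
    (hmr : ∀ t ≤ T, ∀ᵐ ω ∂ℙ, (ℙ[X (t + 1) | ℱ t]) ω * S t ω ≤ 0)
    (l : ℝ) (hl : 0 ≤ l) :
    ∀ n, n ≤ T →
      ∫ ω, (exp (l * S n ω) + exp (-(l * S n ω))) ∂ℙ ≤ 2 * exp ((n : ℝ) * l ^ 2 / 2) := by
  -- measurability of S n w.r.t. ℱ n
  have hSm : ∀ n, StronglyMeasurable[ℱ n] (S n) := by
    intro n
    have : S n = fun ω => ∑ τ ∈ Finset.Icc 1 n, X τ ω := funext (hS n)
    rw [this]
    apply Measurable.stronglyMeasurable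
    exact Finset.measurable_sum _ fun τ hτ =>
      ((hXm τ).mono (ℱ.mono (Finset.mem_Icc.1 hτ).2)).measurable
  have hSmm : ∀ n, AEStronglyMeasurable (S n) ℙ :=
    fun n => ((hSm n).mono (ℱ.le n)).aestronglyMeasurable
  -- a.e. bound on S n
  have hSb : ∀ n, ∀ᵐ ω ∂ℙ, |S n ω| ≤ (n : ℝ) := by
    intro n
    have hae : ∀ᵐ ω ∂ℙ, ∀ τ ∈ Finset.Icc 1 n, |X τ ω| ≤ 1 :=
      (ae_ball_iff (Finset.Icc 1 n).countable_toSet).2 fun τ _ => hXb τ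
    filter_upwards [hae] with ω hω
    calc |S n ω| = |∑ τ ∈ Finset.Icc 1 n, X τ ω| := by rw [hS]
      _ ≤ ∑ τ ∈ Finset.Icc 1 n, |X τ ω| := Finset.abs_sum_le_sum_abs _ _
      _ ≤ ∑ τ ∈ Finset.Icc 1 n, (1 : ℝ) := Finset.sum_le_sum fun τ hτ => hω τ hτ
      _ = ((Finset.Icc 1 n).card : ℝ) := by simp
      _ ≤ (n : ℝ) := by simp [Nat.card_Icc]
  -- integrability of exp(c * S n)
  have hIexp : ∀ (c : ℝ) (n : ℕ), Integrable (fun ω => exp (c * S n ω)) ℙ := by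
    intro c n
    apply integrable_of_ae_abs_le (C := exp (|c| * n))
    · exact (Real.continuous_exp.comp (continuous_const.mul continuous_id)).comp_aestronglyMeasurable
        (hSmm n)
    · filter_upwards [hSb n] with ω hω
      rw [abs_of_pos (exp_pos _)]
      apply Real.exp_le_exp.2
      calc c * S n ω ≤ |c * S n ω| := le_abs_self _
        _ = |c| * |S n ω| := abs_mul _ _
        _ ≤ |c| * n := by
            exact mul_le_mul_of_nonneg_left hω (abs_nonneg c)
  intro n
  induction n with
  | zero =>
    intro _
    have h0 : ∀ ω, S 0 ω = 0 := by
      intro ω; rw [hS]; simp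
    simp only [h0, mul_zero, neg_zero, Real.exp_zero]
    rw [integral_const]
    simp
    norm_num
  | succ n ih =>
    intro hn1
    have hn : n ≤ T := le_trans (Nat.le_succ n) hn1
    have IH := ih hn
    -- decomposition
    have hstep : ∀ ω, S (n + 1) ω = S n ω + X (n + 1) ω := by
      intro ω
      rw [hS, hS, Finset.sum_Icc_succ_top (Nat.succ_le_succ (Nat.zero_le n))]
    -- notation
    set a : Ω → ℝ := ℙ[X (n + 1) | ℱ n] with ha
    set G : Ω → ℝ := fun ω => exp (l * S n ω) with hG
    set G' : Ω → ℝ := fun ω => exp (-(l * S n ω)) with hG'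
    set f : Ω → ℝ := fun ω => G ω - G' ω with hf
    have hGi : Integrable G ℙ := hIexp l n
    have hG'i : Integrable G' ℙ := by
      have := hIexp (-l) n
      simpa [neg_mul] using this
    have hXi : Integrable (X (n + 1)) ℙ := by
      apply integrable_of_ae_abs_le (C := (1 : ℝ))
      · exact ((hXm (n + 1)).mono (ℱ.le (n + 1))).aestronglyMeasurable
      · exact hXb (n + 1)
    have hfm : StronglyMeasurable[ℱ n] f := by
      have hcont : Continuous fun x : ℝ => exp (l * x) - exp (-(l * x)) := by
        fun_prop
      exact hcont.comp_stronglyMeasurable (hSm n)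
    have hGb : ∀ᵐ ω ∂ℙ, |G ω| ≤ exp (l * n) := by
      filter_upwards [hSb n] with ω hω
      rw [abs_of_pos (exp_pos _)]
      apply Real.exp_le_exp.2
      calc l * S n ω ≤ l * |S n ω| := mul_le_mul_of_nonneg_left (le_abs_self _) hl
        _ ≤ l * n := mul_le_mul_of_nonneg_left hω hl
    have hG'b : ∀ᵐ ω ∂ℙ, |G' ω| ≤ exp (l * n) := by
      filter_upwards [hSb n] with ω hω
      rw [abs_of_pos (exp_pos _)]
      apply Real.exp_le_exp.2
      have h1 : -(l * S n ω) = l * -(S n ω) := by ring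
      rw [h1]
      exact le_trans (mul_le_mul_of_nonneg_left (neg_le_abs _) hl)
        (mul_le_mul_of_nonneg_left hω hl)
    have hfXi : Integrable (f * X (n + 1)) ℙ := by
      apply integrable_of_ae_abs_le (C := (2 * exp (l * n)) * 1)
      · exact ((hfm.mono (ℱ.le n)).aestronglyMeasurable).mul
          (((hXm (n + 1)).mono (ℱ.le (n + 1))).aestronglyMeasurable)
      · filter_upwards [hGb, hG'b, hXb (n + 1)] with ω h1 h2 h3
        simp only [Pi.mul_apply, abs_mul, hf]
        apply mul_le_mul _ h3 (abs_nonneg _) (by positivity)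
        calc |G ω - G' ω| ≤ |G ω| + |G' ω| := abs_sub _ _
          _ ≤ 2 * exp (l * n) := by linarith
    -- pointwise chord bound
    have hptw : ∀ᵐ ω ∂ℙ, exp (l * S (n + 1) ω) + exp (-(l * S (n + 1) ω)) ≤
        cosh l * (G ω + G' ω) + sinh l * (f ω * X (n + 1) ω) := by
      filter_upwards [hXb (n + 1)] with ω hx
      have e1 : exp (l * S (n + 1) ω) = G ω * exp (l * X (n + 1) ω) := by
        rw [hstep, hG, ← Real.exp_add]; ring_nf
      have e2 : exp (-(l * S (n + 1) ω)) = G' ω * exp (l * (-(X (n + 1) ω))) := by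
        rw [hstep, hG', ← Real.exp_add]; ring_nf
      have c1 : exp (l * X (n + 1) ω) ≤ cosh l + X (n + 1) ω * sinh l := chord_exp hx
      have c2 : exp (l * (-(X (n + 1) ω))) ≤ cosh l + (-(X (n + 1) ω)) * sinh l :=
        chord_exp (by rwa [abs_neg])
      have hGp : 0 < G ω := exp_pos _
      have hG'p : 0 < G' ω := exp_pos _
      rw [e1, e2]
      calc G ω * exp (l * X (n + 1) ω) + G' ω * exp (l * (-(X (n + 1) ω)))
          ≤ G ω * (cosh l + X (n + 1) ω * sinh l)
            + G' ω * (cosh l + (-(X (n + 1) ω)) * sinh l) :=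
            add_le_add (mul_le_mul_of_nonneg_left c1 hGp.le)
              (mul_le_mul_of_nonneg_left c2 hG'p.le)
        _ = cosh l * (G ω + G' ω) + sinh l * ((G ω - G' ω) * X (n + 1) ω) := by ring
        _ = cosh l * (G ω + G' ω) + sinh l * (f ω * X (n + 1) ω) := by rw [hf]
    -- integrate
    have hRHSi : Integrable
        (fun ω => cosh l * (G ω + G' ω) + sinh l * (f ω * X (n + 1) ω)) ℙ := by
      exact ((hGi.add hG'i).const_mul _).add (hfXi.const_mul _)
    have hmono : ∫ ω, (exp (l * S (n + 1) ω) + exp (-(l * S (n + 1) ω))) ∂ℙ ≤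
        ∫ ω, (cosh l * (G ω + G' ω) + sinh l * (f ω * X (n + 1) ω)) ∂ℙ := by
      apply integral_mono_of_nonneg _ hRHSi hptw
      exact Filter.Eventually.of_forall fun ω => by positivity
    have hsplit : ∫ ω, (cosh l * (G ω + G' ω) + sinh l * (f ω * X (n + 1) ω)) ∂ℙ =
        cosh l * ∫ ω, (G ω + G' ω) ∂ℙ + sinh l * ∫ ω, f ω * X (n + 1) ω ∂ℙ := by
      have hadd1 : Integrable (fun ω => cosh l * (G ω + G' ω)) ℙ :=
        (hGi.add hG'i).const_mul _
      have hadd2 : Integrable (fun ω => sinh l * (f ω * X (n + 1) ω)) ℙ :=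
        hfXi.const_mul _
      rw [integral_add hadd1 hadd2, integral_const_mul, integral_const_mul]
    -- pull-out property of conditional expectation
    have hpull : ∫ ω, f ω * X (n + 1) ω ∂ℙ = ∫ ω, f ω * a ω ∂ℙ := by
      have h1 : ℙ[f * X (n + 1) | ℱ n] =ᵐ[ℙ] f * a :=
        condExp_mul_of_stronglyMeasurable_left hfm hfXi hXi
      calc ∫ ω, f ω * X (n + 1) ω ∂ℙ = ∫ ω, (f * X (n + 1)) ω ∂ℙ := rfl
        _ = ∫ ω, (ℙ[f * X (n + 1) | ℱ n]) ω ∂ℙ := (integral_condExp (ℱ.le n)).symm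
        _ = ∫ ω, (f * a) ω ∂ℙ := integral_congr_ae h1
        _ = ∫ ω, f ω * a ω ∂ℙ := rfl
    -- the mean reversion makes this term nonpositive
    have hneg : ∫ ω, f ω * a ω ∂ℙ ≤ 0 := by
      apply integral_nonpos_of_ae
      filter_upwards [hmr n hn] with ω hω
      rcases lt_trichotomy (S n ω) 0 with h | h | h
      · have haw : 0 ≤ a ω := by nlinarith
        have hfw : f ω ≤ 0 := by
          simp only [hf, hG, hG', sub_nonpos]
          apply Real.exp_le_exp.2
          nlinarith
        exact mul_nonpos_of_nonpos_of_nonneg hfw haw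
      · have : f ω = 0 := by simp [hf, hG, hG', h]
        simp [this]
      · have haw : a ω ≤ 0 := by nlinarith
        have hfw : 0 ≤ f ω := by
          simp only [hf, hG, hG', sub_nonneg]
          apply Real.exp_le_exp.2
          nlinarith
        exact mul_nonpos_of_nonneg_of_nonpos hfw haw
    have hsinh : 0 ≤ sinh l := Real.sinh_nonneg_iff.2 hl
    have hcosh : 0 < cosh l := Real.cosh_pos l
    have hWnn : 0 ≤ ∫ ω, (G ω + G' ω) ∂ℙ :=
      integral_nonneg fun ω => by positivity
    calc ∫ ω, (exp (l * S (n + 1) ω) + exp (-(l * S (n + 1) ω))) ∂ℙ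
        ≤ cosh l * ∫ ω, (G ω + G' ω) ∂ℙ + sinh l * ∫ ω, f ω * X (n + 1) ω ∂ℙ := by
          rw [← hsplit]; exact hmono
      _ ≤ cosh l * ∫ ω, (G ω + G' ω) ∂ℙ := by
          rw [hpull]
          nlinarith
      _ ≤ cosh l * (2 * exp ((n : ℝ) * l ^ 2 / 2)) := by
          apply mul_le_mul_of_nonneg_left _ hcosh.le
          simpa [hG, hG'] using IH
      _ ≤ exp (l ^ 2 / 2) * (2 * exp ((n : ℝ) * l ^ 2 / 2)) := by
          apply mul_le_mul_of_nonneg_right (Real.cosh_le_exp_half_sq l) (by positivity)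
      _ = 2 * exp (((n + 1 : ℕ) : ℝ) * l ^ 2 / 2) := by
          push_cast
          rw [show ((n : ℝ) + 1) * l ^ 2 / 2 = (n : ℝ) * l ^ 2 / 2 + l ^ 2 / 2 by ring,
            Real.exp_add]
          ring

/-- Under global mean reversion with `X t = M t - μ` (so `M t ∈ [0,1]`,
`μ ∈ [0,1]`, hence `|X t| ≤ 1`), the sample mean `μ̂_t = (1/t)∑_{τ=1}^t M τ` satisfies,
uniformly over `1 ≤ t ≤ T` with probability at least `1 - δ`,
`|μ̂_t - μ| ≤ sqrt(4 log(2T/δ)/t)`. -/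
theorem stmt5 {Ω : Type*} {m : MeasurableSpace Ω} (ℙ : Measure Ω) [IsProbabilityMeasure ℙ]
    (ℱ : Filtration ℕ m) (T : ℕ) (hT : 1 ≤ T)
    (M : ℕ → Ω → ℝ) (hadapted : Adapted ℱ M)
    (hMbdd : ∀ t, ∀ᵐ ω ∂ℙ, M t ω ∈ Set.Icc (0:ℝ) 1)
    (μ : ℝ) (hμ : μ ∈ Set.Icc (0:ℝ) 1)
    (X : ℕ → Ω → ℝ) (hX : ∀ t ω, X t ω = M t ω - μ)
    (S : ℕ → Ω → ℝ) (hS : ∀ t ω, S t ω = ∑ τ ∈ Finset.Icc 1 t, X τ ω)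
    (hmr : ∀ t ≤ T, ∀ᵐ ω ∂ℙ, (ℙ[X (t + 1) | ℱ t]) ω * S t ω ≤ 0)
    (δ : ℝ) (hδ : δ ∈ Set.Ioo (0:ℝ) 1) :
    ℙ {ω | ∃ t ∈ Finset.Icc 1 T,
        Real.sqrt (4 * Real.log (2 * T / δ) / t) <
          |(∑ τ ∈ Finset.Icc 1 t, M τ ω) / t - μ|} ≤ ENNReal.ofReal δ := by
  obtain ⟨hδ0, hδ1⟩ := hδ
  have hT0 : (0 : ℝ) < T := by exact_mod_cast hT
  set L := Real.log (2 * T / δ) with hLdef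
  have h2Tδ : (0 : ℝ) < 2 * T / δ := by positivity
  have hT1 : (1 : ℝ) ≤ T := by exact_mod_cast hT
  have h2Tδ1 : (2 : ℝ) ≤ 2 * T / δ := by
    rw [le_div_iff₀ hδ0]; nlinarith
  have hL : 0 < L := Real.log_pos (by linarith)
  -- basic facts about X and S
  have hXm : ∀ t, StronglyMeasurable[ℱ t] (X t) := by
    intro t
    have : X t = fun ω => M t ω - μ := funext (hX t)
    rw [this]
    exact ((hadapted t).sub measurable_const).stronglyMeasurable
  have hXb : ∀ t, ∀ᵐ ω ∂ℙ, |X t ω| ≤ 1 := by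
    intro t
    filter_upwards [hMbdd t] with ω hω
    rw [hX, abs_le]
    constructor <;> [nlinarith [hω.1, hω.2, hμ.1, hμ.2]; nlinarith [hω.1, hω.2, hμ.1, hμ.2]]
  have hSmm : ∀ n, AEStronglyMeasurable (S n) ℙ := by
    intro n
    have : S n = fun ω => ∑ τ ∈ Finset.Icc 1 n, X τ ω := funext (hS n)
    rw [this]
    apply Measurable.aestronglyMeasurable
    exact Finset.measurable_sum _ fun τ hτ =>
      ((hXm τ).mono (ℱ.le τ)).measurable
  have hSb : ∀ n, ∀ᵐ ω ∂ℙ, |S n ω| ≤ (n : ℝ) := by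
    intro n
    have hae : ∀ᵐ ω ∂ℙ, ∀ τ ∈ Finset.Icc 1 n, |X τ ω| ≤ 1 :=
      (ae_ball_iff (Finset.Icc 1 n).countable_toSet).2 fun τ _ => hXb τ
    filter_upwards [hae] with ω hω
    calc |S n ω| = |∑ τ ∈ Finset.Icc 1 n, X τ ω| := by rw [hS]
      _ ≤ ∑ τ ∈ Finset.Icc 1 n, |X τ ω| := Finset.abs_sum_le_sum_abs _ _
      _ ≤ ∑ τ ∈ Finset.Icc 1 n, (1 : ℝ) := Finset.sum_le_sum fun τ hτ => hω τ hτ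
      _ = ((Finset.Icc 1 n).card : ℝ) := by simp
      _ ≤ (n : ℝ) := by simp [Nat.card_Icc]
  -- rewrite the event as a union
  have hset : {ω | ∃ t ∈ Finset.Icc 1 T,
        Real.sqrt (4 * L / t) < |(∑ τ ∈ Finset.Icc 1 t, M τ ω) / t - μ|} =
      ⋃ t ∈ Finset.Icc 1 T, {ω | Real.sqrt (4 * L * t) < |S t ω|} := by
    ext ω
    simp only [Set.mem_setOf_eq, Set.mem_iUnion, exists_prop]
    apply exists_congr
    intro t
    apply and_congr_right
    intro ht
    have ht1 : 1 ≤ t := (Finset.mem_Icc.1 ht).1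
    have ht0 : (0 : ℝ) < t := by exact_mod_cast ht1
    have hmean : (∑ τ ∈ Finset.Icc 1 t, M τ ω) / t - μ = S t ω / t := by
      rw [hS]
      have : ∀ τ ∈ Finset.Icc 1 t, X τ ω = M τ ω - μ := fun τ _ => hX τ ω
      rw [Finset.sum_congr rfl this, Finset.sum_sub_distrib, Finset.sum_const, Nat.card_Icc]
      have h1 : t + 1 - 1 = t := by omega
      rw [h1]
      field_simp
      rw [nsmul_eq_mul]
    have hsqrt : Real.sqrt (4 * L / t) = Real.sqrt (4 * L * t) / t := by
      rw [show 4 * L / (t : ℝ) = 4 * L * t / (t : ℝ) ^ 2 by field_simp,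
        Real.sqrt_div (by positivity) ((t : ℝ) ^ 2), Real.sqrt_sq ht0.le]
    rw [hmean, hsqrt, abs_div, abs_of_pos ht0, div_lt_div_iff_of_pos_right ht0]
  rw [hset]
  -- per-time bound and union bound
  have hbound : ∀ t ∈ Finset.Icc 1 T,
      ℙ {ω | Real.sqrt (4 * L * t) < |S t ω|} ≤ ENNReal.ofReal (2 * exp (-(2 * L))) := by
    intro t ht
    obtain ⟨ht1, htT⟩ := Finset.mem_Icc.1 ht
    have ht0 : (0 : ℝ) < t := by exact_mod_cast ht1
    set ε := Real.sqrt (4 * L * t) with hεdef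
    have hε4 : (0 : ℝ) < 4 * L * t := by positivity
    have hε : 0 < ε := Real.sqrt_pos.2 hε4
    have hε2 : ε ^ 2 = 4 * L * t := Real.sq_sqrt hε4.le
    set l := ε / t with hldef
    have hl : 0 < l := by positivity
    set W : Ω → ℝ := fun ω => exp (l * S t ω) + exp (-(l * S t ω)) with hW
    have hWm : AEStronglyMeasurable W ℙ := by
      have hcont : Continuous fun x : ℝ => exp (l * x) + exp (-(l * x)) := by fun_prop
      exact hcont.comp_aestronglyMeasurable (hSmm t)
    have hWi : Integrable W ℙ := by
      apply integrable_of_ae_abs_le (C := 2 * exp (l * t)) hWm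
      filter_upwards [hSb t] with ω hω
      have h1 : l * S t ω ≤ l * t :=
        le_trans (mul_le_mul_of_nonneg_left (le_abs_self _) hl.le)
          (mul_le_mul_of_nonneg_left hω hl.le)
      have h2 : -(l * S t ω) ≤ l * t := by
        rw [← mul_neg]
        exact le_trans (mul_le_mul_of_nonneg_left (neg_le_abs _) hl.le)
          (mul_le_mul_of_nonneg_left hω hl.le)
      have := Real.exp_le_exp.2 h1
      have := Real.exp_le_exp.2 h2
      rw [abs_of_pos (by positivity)]
      simp only [hW]
      linarith
    have hWnn : 0 ≤ᵐ[ℙ] W := Filter.Eventually.of_forall fun ω => by positivity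
    have hmgf := mgf_bound ℙ ℱ T X hXm hXb S hS hmr l hl.le t htT
    have hmark := mul_meas_ge_le_integral_of_nonneg hWnn hWi (exp (l * ε))
    have hsub : {ω | ε < |S t ω|} ⊆ {x | exp (l * ε) ≤ W x} := by
      intro ω hω
      simp only [Set.mem_setOf_eq] at hω ⊢
      have h1 : exp (l * ε) ≤ exp (l * |S t ω|) :=
        Real.exp_le_exp.2 (mul_le_mul_of_nonneg_left hω.le hl.le)
      rcases abs_cases (S t ω) with ⟨h, _⟩ | ⟨h, _⟩
      · rw [h] at h1
        have : (0:ℝ) < exp (-(l * S t ω)) := exp_pos _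
        simp only [hW]; linarith
      · rw [h] at h1
        rw [mul_neg, ← neg_mul] at h1
        have : (0:ℝ) < exp (l * S t ω) := exp_pos _
        simp only [hW]
        rw [← neg_mul]
        linarith
    have hexpε : (0 : ℝ) < exp (l * ε) := exp_pos _
    have hmeas_fin : ℙ {x | exp (l * ε) ≤ W x} ≠ ⊤ := measure_ne_top _ _
    have htoReal : (ℙ {x | exp (l * ε) ≤ W x}).toReal ≤ 2 * exp (-(2 * L)) := by
      have h1 : (ℙ {x | exp (l * ε) ≤ W x}).toReal ≤ (∫ ω, W ω ∂ℙ) / exp (l * ε) := by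
        rw [le_div_iff₀ hexpε]
        rw [measureReal_def] at hmark
        linarith [hmark]
      have h2 : (∫ ω, W ω ∂ℙ) / exp (l * ε) ≤ (2 * exp ((t : ℝ) * l ^ 2 / 2)) / exp (l * ε) := by
        exact (div_le_div_iff_of_pos_right hexpε).2 hmgf
      have h3 : (2 * exp ((t : ℝ) * l ^ 2 / 2)) / exp (l * ε) = 2 * exp ((t : ℝ) * l ^ 2 / 2 - l * ε) := by
        rw [Real.exp_sub]; ring
      have h4 : (t : ℝ) * l ^ 2 / 2 - l * ε = -(2 * L) := by
        rw [hldef]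
        have : (t : ℝ) * (ε / t) ^ 2 / 2 - ε / t * ε = -(ε ^ 2) / (2 * t) := by
          field_simp; ring
        rw [this, hε2]
        field_simp
        ring
      calc (ℙ {x | exp (l * ε) ≤ W x}).toReal ≤ (∫ ω, W ω ∂ℙ) / exp (l * ε) := h1
        _ ≤ (2 * exp ((t : ℝ) * l ^ 2 / 2)) / exp (l * ε) := h2
        _ = 2 * exp (-(2 * L)) := by rw [h3, h4]
    calc ℙ {ω | ε < |S t ω|} ≤ ℙ {x | exp (l * ε) ≤ W x} := measure_mono hsub
      _ = ENNReal.ofReal ((ℙ {x | exp (l * ε) ≤ W x}).toReal) :=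
          (ENNReal.ofReal_toReal hmeas_fin).symm
      _ ≤ ENNReal.ofReal (2 * exp (-(2 * L))) := ENNReal.ofReal_le_ofReal htoReal
  calc ℙ (⋃ t ∈ Finset.Icc 1 T, {ω | Real.sqrt (4 * L * t) < |S t ω|})
      ≤ ∑ t ∈ Finset.Icc 1 T, ℙ {ω | Real.sqrt (4 * L * t) < |S t ω|} :=
        measure_biUnion_finset_le _ _
    _ ≤ ∑ t ∈ Finset.Icc 1 T, ENNReal.ofReal (2 * exp (-(2 * L))) :=
        Finset.sum_le_sum hbound
    _ = (T : ℕ) • ENNReal.ofReal (2 * exp (-(2 * L))) := by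
        rw [Finset.sum_const, Nat.card_Icc]
        norm_num
    _ ≤ ENNReal.ofReal δ := by
        rw [nsmul_eq_mul, ← ENNReal.ofReal_natCast T, ← ENNReal.ofReal_mul (by positivity)]
        apply ENNReal.ofReal_le_ofReal
        have hexpL : exp L = 2 * T / δ := Real.exp_log h2Tδ
        have h2L : exp (2 * L) = (2 * T / δ) ^ 2 := by
          rw [two_mul, Real.exp_add, hexpL]; ring
        have hexpneg : exp (-(2 * L)) = ((2 * T / δ) ^ 2)⁻¹ := by
          rw [← h2L, Real.exp_neg]
        rw [hexpneg]
        rw [show ((2:ℝ) * T / δ) ^ 2 = 4 * T ^ 2 / δ ^ 2 by field_simp; ring, inv_div]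
        rw [show (T:ℝ) * (2 * (δ ^ 2 / (4 * T ^ 2))) = δ ^ 2 / (2 * T) by field_simp; ring]
        rw [div_le_iff₀ (by positivity)]
        nlinarith
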